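/- For every complex number s with s ∉ {−4, −3, −2, −1, 0, 1, 2} and with ζ(1−s) ≠ 0, ζ(s+2) ≠ 0, ζ(−s) ≠ 0, ζ(s+3) ≠ 0, ζ(2−s) ≠ 0, ζ(s+1) ≠ 0, ζ(−1−s) ≠ 0, ζ(s+4) ≠ 0, one has 0 = −3·ζ(s)·ζ(−1−s)/(ζ(1−s)·ζ(s+2)) + 3·ζ(s+1)·ζ(−2−s)/(ζ(−s)·ζ(s+3)) + ζ(s−1)·ζ(−s)/(ζ(2−s)·ζ(s+1)) − ζ(s+2)·ζ(−3−s)/(ζ(−1−s)·ζ(s+4)). -/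

import Mathlib

open Complex

/-- If `w` is a nonpositive even integer `≤ -4` then `ζ(w+2) = 0`; contrapositive form
used to deduce `Gammaℝ w ≠ 0`. -/
lemma Gaux_7 {w : ℂ} (h0 : w ≠ 0) (h2 : w + 2 ≠ 0) (hz : riemannZeta (w + 2) ≠ 0) :
    Gammaℝ w ≠ 0 := by
  intro h
  obtain ⟨n, hn⟩ := Gammaℝ_eq_zero_iff.mp h
  match n with
  | 0 => exact h0 (by simpa using hn)
  | 1 => exact h2 (by rw [hn]; norm_num)
  | (k + 2) =>
    apply hz
    rw [hn]
    have := riemannZeta_neg_two_mul_nat_add_one k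
    convert this using 2
    push_cast
    ring

lemma key_7 (z : ℂ) (hz0 : z ≠ 0) (hz1 : z + 1 ≠ 0) (hz2 : z + 2 ≠ 0)
    (h1z : (1 : ℂ) - z ≠ 0)
    (hG1 : Gammaℝ z ≠ 0) (hG2 : Gammaℝ (-1 - z) ≠ 0)
    (hζ1 : riemannZeta (1 - z) ≠ 0) (hζ2 : riemannZeta (z + 2) ≠ 0) :
    riemannZeta z * riemannZeta (-1 - z) / (riemannZeta (1 - z) * riemannZeta (z + 2)) =
      -z * (z + 1) / (4 * (Real.pi : ℂ) ^ 2) := by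
  have hm1z : (-1 : ℂ) - z ≠ 0 := by intro h; apply hz1; linear_combination -h
  have e1 : riemannZeta z = completedRiemannZeta z / Gammaℝ z :=
    riemannZeta_def_of_ne_zero hz0
  have e2 : riemannZeta (-1 - z) = completedRiemannZeta (z + 2) / Gammaℝ (-1 - z) := by
    rw [riemannZeta_def_of_ne_zero hm1z, show (-1 : ℂ) - z = 1 - (z + 2) by ring,
      completedRiemannZeta_one_sub, show (1 : ℂ) - (z + 2) = -1 - z by ring]
  have e3 : riemannZeta (1 - z) = completedRiemannZeta z / Gammaℝ (1 - z) := by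
    rw [riemannZeta_def_of_ne_zero h1z, completedRiemannZeta_one_sub]
  have e4 : riemannZeta (z + 2) = completedRiemannZeta (z + 2) / Gammaℝ (z + 2) :=
    riemannZeta_def_of_ne_zero hz2
  rw [e3] at hζ1
  rw [e4] at hζ2
  obtain ⟨hL1, hG3⟩ := div_ne_zero_iff.mp hζ1
  obtain ⟨hL2, hG4⟩ := div_ne_zero_iff.mp hζ2
  have hπ : (Real.pi : ℂ) ≠ 0 := ofReal_ne_zero.mpr Real.pi_ne_zero
  have r1 : Gammaℝ (z + 2) = Gammaℝ z * z / 2 / (Real.pi : ℂ) := Gammaℝ_add_two hz0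
  have r2 : Gammaℝ (1 - z) = Gammaℝ (-1 - z) * (-1 - z) / 2 / (Real.pi : ℂ) := by
    rw [show (1 : ℂ) - z = (-1 - z) + 2 by ring]
    exact Gammaℝ_add_two hm1z
  have step1 : riemannZeta z * riemannZeta (-1 - z) /
      (riemannZeta (1 - z) * riemannZeta (z + 2)) =
      Gammaℝ (1 - z) * Gammaℝ (z + 2) / (Gammaℝ z * Gammaℝ (-1 - z)) := by
    rw [e1, e2, e3, e4]
    field_simp
  rw [step1, r1, r2]
  field_simp
  ring

theorem stmt_7 (s : ℂ) (hs : s ∉ ({-4, -3, -2, -1, 0, 1, 2} : Set ℂ))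
    (h1 : riemannZeta (1 - s) ≠ 0) (h2 : riemannZeta (s + 2) ≠ 0)
    (h3 : riemannZeta (-s) ≠ 0) (h4 : riemannZeta (s + 3) ≠ 0)
    (h5 : riemannZeta (2 - s) ≠ 0) (h6 : riemannZeta (s + 1) ≠ 0)
    (h7 : riemannZeta (-1 - s) ≠ 0) (h8 : riemannZeta (s + 4) ≠ 0) :
    0 =
      -3 * (riemannZeta s * riemannZeta (-1 - s)) /
          (riemannZeta (1 - s) * riemannZeta (s + 2)) +
        3 * (riemannZeta (s + 1) * riemannZeta (-2 - s)) /
          (riemannZeta (-s) * riemannZeta (s + 3)) +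
        riemannZeta (s - 1) * riemannZeta (-s) /
          (riemannZeta (2 - s) * riemannZeta (s + 1)) -
        riemannZeta (s + 2) * riemannZeta (-3 - s) /
          (riemannZeta (-1 - s) * riemannZeta (s + 4)) := by
  simp only [Set.mem_insert_iff, Set.mem_singleton_iff, not_or] at hs
  obtain ⟨hm4, hm3, hm2, hm1, h0, hp1, hp2⟩ := hs
  have d0 : s ≠ 0 := h0
  have ne : ∀ a : ℂ, s ≠ a → s - a ≠ 0 := fun a ha h => ha (by linear_combination h)
  -- basic nonvanishing of shifted points
  have n0 : s ≠ 0 := h0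
  have nm1 : s + 1 ≠ 0 := fun h => hm1 (by linear_combination h)
  have nm2 : s + 2 ≠ 0 := fun h => hm2 (by linear_combination h)
  have nm3 : s + 3 ≠ 0 := fun h => hm3 (by linear_combination h)
  have nm4 : s + 4 ≠ 0 := fun h => hm4 (by linear_combination h)
  have np1 : s - 1 ≠ 0 := fun h => hp1 (by linear_combination h)
  have np2 : (1 : ℂ) - s ≠ 0 := fun h => hp1 (by linear_combination -h)
  have np3 : (2 : ℂ) - s ≠ 0 := fun h => hp2 (by linear_combination -h)
  have nn0 : -s ≠ 0 := fun h => h0 (by linear_combination -h)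
  have nn1 : (-1 : ℂ) - s ≠ 0 := fun h => hm1 (by linear_combination -h)
  have nn2 : (-2 : ℂ) - s ≠ 0 := fun h => hm2 (by linear_combination -h)
  have nn3 : (-3 : ℂ) - s ≠ 0 := fun h => hm3 (by linear_combination -h)
  -- Gammaℝ nonvanishing at the eight relevant points
  have G1 : Gammaℝ s ≠ 0 := Gaux_7 n0 nm2 h2
  have G2 : Gammaℝ (s + 1) ≠ 0 := Gaux_7 nm1 (by rw [show s + 1 + 2 = s + 3 by ring]; exact nm3)
    (by rw [show s + 1 + 2 = s + 3 by ring]; exact h4)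
  have G3 : Gammaℝ (s + 2) ≠ 0 := Gaux_7 nm2 (by rw [show s + 2 + 2 = s + 4 by ring]; exact nm4)
    (by rw [show s + 2 + 2 = s + 4 by ring]; exact h8)
  have G4 : Gammaℝ (s - 1) ≠ 0 := Gaux_7 np1 (by rw [show s - 1 + 2 = s + 1 by ring]; exact nm1)
    (by rw [show s - 1 + 2 = s + 1 by ring]; exact h6)
  have G5 : Gammaℝ (-s) ≠ 0 := Gaux_7 nn0 (by rw [show -s + 2 = 2 - s by ring]; exact np3)
    (by rw [show -s + 2 = 2 - s by ring]; exact h5)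
  have G6 : Gammaℝ (-1 - s) ≠ 0 := Gaux_7 nn1 (by rw [show -1 - s + 2 = 1 - s by ring]; exact np2)
    (by rw [show -1 - s + 2 = 1 - s by ring]; exact h1)
  have G7 : Gammaℝ (-2 - s) ≠ 0 := Gaux_7 nn2 (by rw [show -2 - s + 2 = -s by ring]; exact nn0)
    (by rw [show -2 - s + 2 = -s by ring]; exact h3)
  have G8 : Gammaℝ (-3 - s) ≠ 0 := Gaux_7 nn3 (by rw [show -3 - s + 2 = -1 - s by ring]; exact nn1)
    (by rw [show -3 - s + 2 = -1 - s by ring]; exact h7)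
  -- the four term evaluations
  have k1 := key_7 s n0 nm1 nm2 np2 G1 G6 h1 h2
  have k2 := key_7 (s + 1) nm1 (by rw [show s + 1 + 1 = s + 2 by ring]; exact nm2)
    (by rw [show s + 1 + 2 = s + 3 by ring]; exact nm3)
    (by rw [show (1 : ℂ) - (s + 1) = -s by ring]; exact nn0)
    G2 (by rw [show (-1 : ℂ) - (s + 1) = -2 - s by ring]; exact G7)
    (by rw [show (1 : ℂ) - (s + 1) = -s by ring]; exact h3)
    (by rw [show s + 1 + 2 = s + 3 by ring]; exact h4)
  have k3 := key_7 (s - 1) np1 (by rw [show s - 1 + 1 = s by ring]; exact n0)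
    (by rw [show s - 1 + 2 = s + 1 by ring]; exact nm1)
    (by rw [show (1 : ℂ) - (s - 1) = 2 - s by ring]; exact np3)
    G4 (by rw [show (-1 : ℂ) - (s - 1) = -s by ring]; exact G5)
    (by rw [show (1 : ℂ) - (s - 1) = 2 - s by ring]; exact h5)
    (by rw [show s - 1 + 2 = s + 1 by ring]; exact h6)
  have k4 := key_7 (s + 2) nm2 (by rw [show s + 2 + 1 = s + 3 by ring]; exact nm3)
    (by rw [show s + 2 + 2 = s + 4 by ring]; exact nm4)
    (by rw [show (1 : ℂ) - (s + 2) = -1 - s by ring]; exact nn1)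
    G3 (by rw [show (-1 : ℂ) - (s + 2) = -3 - s by ring]; exact G8)
    (by rw [show (1 : ℂ) - (s + 2) = -1 - s by ring]; exact h7)
    (by rw [show s + 2 + 2 = s + 4 by ring]; exact h8)
  rw [show (-1 : ℂ) - (s + 1) = -2 - s by ring, show (1 : ℂ) - (s + 1) = -s by ring,
    show s + 1 + 2 = s + 3 by ring] at k2
  rw [show (-1 : ℂ) - (s - 1) = -s by ring, show (1 : ℂ) - (s - 1) = 2 - s by ring,
    show s - 1 + 2 = s + 1 by ring] at k3
  rw [show (-1 : ℂ) - (s + 2) = -3 - s by ring, show (1 : ℂ) - (s + 2) = -1 - s by ring,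
    show s + 2 + 2 = s + 4 by ring] at k4
  rw [mul_div_assoc (-3) (riemannZeta s * riemannZeta (-1 - s)),
    mul_div_assoc 3 (riemannZeta (s + 1) * riemannZeta (-2 - s)), k1, k2, k3, k4]
  have hπ : (Real.pi : ℂ) ≠ 0 := ofReal_ne_zero.mpr Real.pi_ne_zero
  field_simp
  ring
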